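/- (Erdős–Rado theorem for pairs) Let κ be an infinite cardinal, let X be a set of cardinality at least (2^κ)⁺, let C be a set of colors of cardinality at most κ, and let f be a function assigning a color in C to every 2-element subset of X. Then there exists a subset H ⊆ X of cardinality κ⁺ such that f is constant on the 2-element subsets of H. -/

import Mathlib

open Cardinal

universe u

/-- Erdős–Rado for pairs: Let `κ` be an infinite cardinal. If `X` has
cardinality at least `(2^κ)⁺`, `C` has cardinality at most `κ`, and `f` colours the
2-element subsets of `X` by colours in `C`, then there is `H ⊆ X` of cardinality `κ⁺`
such that `f` is constant on the 2-element subsets of `H`. -/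
theorem stmt_9 {κ : Cardinal.{u}} (hκ : ℵ₀ ≤ κ)
    {X C : Type u} [DecidableEq X] (hX : Order.succ (2 ^ κ) ≤ #X) (hC : #C ≤ κ)
    (f : Finset X → C) :
    ∃ H : Set X, #H = Order.succ κ ∧
      ∀ x ∈ H, ∀ y ∈ H, x ≠ y → ∀ x' ∈ H, ∀ y' ∈ H, x' ≠ y' →
        f {x, y} = f {x', y'} := by
  classical
  -- basic cardinal facts
  have h2κ : ℵ₀ ≤ 2 ^ κ := hκ.trans (Cardinal.cantor κ).le
  have hsκ : Order.succ κ ≤ 2 ^ κ := Order.succ_le_of_lt (Cardinal.cantor κ)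
  haveI hXne : Nonempty X := by
    rw [← Cardinal.mk_ne_zero_iff]
    have h0 : (0 : Cardinal) < #X :=
      lt_of_lt_of_le (by simpa using Order.bot_lt_succ (2 ^ κ)) hX
    exact h0.ne'
  set K : Type u := κ.out with hKdef
  have hKcard : #K = κ := Cardinal.mk_out κ
  haveI hKne : Nonempty K := by
    rw [← Cardinal.mk_ne_zero_iff, hKcard]
    exact (Cardinal.aleph0_pos.trans_le hκ).ne'
  -- witness function
  let w : (K → X) → (K → C) → X := fun s t =>
    if h : ∃ a : X, a ∉ Set.range s ∧ ∀ k, f {s k, a} = t k then h.choose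
    else Classical.arbitrary X
  have hw : ∀ s t, (∃ a : X, a ∉ Set.range s ∧ ∀ k, f {s k, a} = t k) →
      w s t ∉ Set.range s ∧ ∀ k, f {s k, w s t} = t k := by
    intro s t h
    simp only [w, dif_pos h]
    exact h.choose_spec
  -- one-step closure operator
  let g : Set X → Set X := fun S =>
    S ∪ (fun p : (K → X) × (K → C) => w p.1 p.2) '' {p | ∀ k, p.1 k ∈ S}
  have hgsub : ∀ S, S ⊆ g S := fun S => Set.subset_union_left
  have hgcard : ∀ S : Set X, #S ≤ 2 ^ κ → #(g S) ≤ 2 ^ κ := by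
    intro S hS
    refine le_trans (Cardinal.mk_union_le _ _) ?_
    have himg : #((fun p : (K → X) × (K → C) => w p.1 p.2) '' {p | ∀ k, p.1 k ∈ S}) ≤ 2 ^ κ := by
      refine le_trans (Cardinal.mk_image_le) ?_
      have hinj : Function.Injective
          (fun p : {p : (K → X) × (K → C) // ∀ k, p.1 k ∈ S} =>
            ((fun k => (⟨p.1.1 k, p.2 k⟩ : S)), p.1.2) : _ → (K → S) × (K → C)) := by
        rintro ⟨⟨s₁, t₁⟩, h₁⟩ ⟨⟨s₂, t₂⟩, h₂⟩ h
        simp only [Prod.mk.injEq] at h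
        obtain ⟨hfun, ht⟩ := h
        have : s₁ = s₂ := funext fun k => congrArg Subtype.val (congrFun hfun k)
        subst this; subst ht; rfl
      refine le_trans (Cardinal.mk_le_of_injective hinj) ?_
      have : #((K → S) × (K → C)) = (#S ^ κ) * (#C ^ κ) := by
        simp [Cardinal.mk_prod, Cardinal.mk_arrow, hKcard]
      rw [this]
      have h1 : #(S : Set X) ^ κ ≤ 2 ^ κ := by
        calc #(S : Set X) ^ κ ≤ (2 ^ κ) ^ κ := Cardinal.power_le_power_right hS
        _ = 2 ^ (κ * κ) := by rw [← Cardinal.power_mul]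
        _ = 2 ^ κ := by rw [Cardinal.mul_eq_self hκ]
      have h2 : #C ^ κ ≤ 2 ^ κ := by
        calc #C ^ κ ≤ κ ^ κ := Cardinal.power_le_power_right hC
        _ = 2 ^ κ := Cardinal.power_self_eq hκ
      calc #(S : Set X) ^ κ * (#C ^ κ) ≤ 2 ^ κ * 2 ^ κ := mul_le_mul' h1 h2
      _ = 2 ^ κ := Cardinal.mul_eq_self h2κ
    calc #(S : Set X) + _ ≤ 2 ^ κ + 2 ^ κ := add_le_add hS himg
    _ = 2 ^ κ := Cardinal.add_eq_self h2κ
  -- the index type of order type κ⁺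
  set I : Type u := (Order.succ κ).ord.ToType with hIdef
  have hIcard : #I = Order.succ κ := by
    rw [hIdef, Cardinal.mk_toType, Cardinal.card_ord]
  haveI hIne : Nonempty I := by
    rw [hIdef, Ordinal.toType_nonempty_iff_ne_zero]
    intro h
    have := Cardinal.card_ord (Order.succ κ)
    rw [h] at this
    simp only [Ordinal.card_zero] at this
    exact (Order.succ_ne_bot κ) (by simpa using this.symm)
  have wf : WellFounded ((· < ·) : I → I → Prop) := IsWellFounded.wf
  have hIio : ∀ i : I, #(Set.Iio i) ≤ κ := fun i =>
    Order.lt_succ_iff.mp (Cardinal.mk_Iio_ord_toType i)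
  -- the tower of sets
  let a₀ : X := Classical.arbitrary X
  let F : I → Set X := wf.fix
    (fun i rec => g ({a₀} ∪ ⋃ j : Set.Iio i, rec j.1 j.2))
  let D : I → Set X := fun i => {a₀} ∪ ⋃ j : Set.Iio i, F j.1
  have hF : ∀ i, F i = g (D i) := fun i => wf.fix_eq _ i
  have hFcard : ∀ i, #(F i) ≤ 2 ^ κ := by
    intro i
    induction i using wf.induction with
    | _ i ih =>
      rw [hF i]
      refine hgcard _ ?_
      refine le_trans (Cardinal.mk_union_le _ _) ?_
      have h1 : #({a₀} : Set X) ≤ 2 ^ κ := by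
        rw [Cardinal.mk_singleton]
        exact le_trans (le_trans one_le_aleph0 hκ) (Cardinal.cantor κ).le
      have h2 : #(⋃ j : Set.Iio i, F j.1) ≤ 2 ^ κ := by
        refine le_trans (Cardinal.mk_iUnion_le _) ?_
        have hsup : ⨆ j : Set.Iio i, #(F j.1) ≤ 2 ^ κ :=
          ciSup_le' fun j => ih j.1 j.2
        calc #(Set.Iio i) * ⨆ j : Set.Iio i, #(F j.1) ≤ (2 ^ κ) * (2 ^ κ) :=
              mul_le_mul' (le_trans (hIio i) (le_trans (Order.le_succ κ) hsκ)) hsup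
        _ = 2 ^ κ := Cardinal.mul_eq_self h2κ
      calc #({a₀} : Set X) + _ ≤ 2 ^ κ + 2 ^ κ := add_le_add h1 h2
      _ = 2 ^ κ := Cardinal.add_eq_self h2κ
  have hDsubF : ∀ i, D i ⊆ F i := fun i => (hF i) ▸ hgsub (D i)
  set A : Set X := ⋃ i, F i with hAdef
  have hAcard : #A ≤ 2 ^ κ := by
    refine le_trans (Cardinal.mk_iUnion_le _) ?_
    calc #I * ⨆ i, #(F i) ≤ (2 ^ κ) * (2 ^ κ) :=
      mul_le_mul' (hIcard ▸ hsκ) (ciSup_le' hFcard)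
    _ = 2 ^ κ := Cardinal.mul_eq_self h2κ
  have ha₀A : a₀ ∈ A := by
    obtain ⟨i⟩ := hIne
    exact Set.mem_iUnion.mpr ⟨i, hDsubF i (Or.inl rfl)⟩
  -- the closure property of A
  have hclo : ∀ B : Set X, B ⊆ A → #B ≤ κ → ∀ x : X, x ∉ B →
      ∃ y, y ∈ A ∧ y ∉ B ∧ ∀ b ∈ B, f {b, y} = f {b, x} := by
    intro B hBA hBκ x hxB
    rcases B.eq_empty_or_nonempty with hBe | ⟨b₀, hb₀⟩
    · subst hBe
      exact ⟨a₀, ha₀A, by simp, by simp⟩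
    · -- enumerate B by K
      obtain ⟨φ⟩ : Nonempty (B ↪ K) := (Cardinal.le_def _ _).mp (hKcard ▸ hBκ)
      let s : K → X := fun k =>
        if h : ∃ b : B, φ b = k then (h.choose : X) else b₀
      have hrange : Set.range s = B := by
        apply Set.eq_of_subset_of_subset
        · rintro _ ⟨k, rfl⟩
          by_cases h : ∃ b : B, φ b = k
          · simp only [s, dif_pos h]; exact (h.choose).2
          · simp only [s, dif_neg h]; exact hb₀
        · intro b hb
          have h : ∃ b' : B, φ b' = φ ⟨b, hb⟩ := ⟨⟨b, hb⟩, rfl⟩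
          refine ⟨φ ⟨b, hb⟩, ?_⟩
          simp only [s, dif_pos h]
          have := φ.injective h.choose_spec
          rw [this]
      -- find a stage bounding all elements of B
      have hstage : ∀ k, ∃ i : I, s k ∈ F i := by
        intro k
        have : s k ∈ A := hBA (hrange ▸ Set.mem_range_self k)
        exact Set.mem_iUnion.mp this
      choose ι hι using hstage
      let e := Ordinal.ToType.mk (o := (Order.succ κ).ord)
      let o : K → Ordinal.{u} := fun k => (e.symm (ι k) : Ordinal)
      have ho : ∀ k, o k < (Order.succ κ).ord := fun k => (e.symm (ι k)).2
      have hbdd : BddAbove (Set.range o) := ⟨(Order.succ κ).ord, by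
        rintro _ ⟨k, rfl⟩; exact (ho k).le⟩
      have hσ : iSup o < (Order.succ κ).ord := by
        apply Ordinal.iSup_lt_ord _ ho
        rw [(Cardinal.isRegular_succ hκ).cof_eq, hKcard]
        exact Order.lt_succ κ
      have hσs : Order.succ (iSup o) < (Order.succ κ).ord :=
        (Cardinal.isSuccLimit_ord (hκ.trans (Order.le_succ κ))).succ_lt hσ
      let i₁ : I := e ⟨Order.succ (iSup o), hσs⟩
      have hlt : ∀ k, ι k < i₁ := by
        intro k
        have : e.symm (ι k) < (⟨Order.succ (iSup o), hσs⟩ : Set.Iio (Order.succ κ).ord) := by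
          rw [← Subtype.coe_lt_coe]
          exact lt_of_le_of_lt (le_ciSup hbdd k) (Order.lt_succ _)
        calc ι k = e (e.symm (ι k)) := (e.apply_symm_apply _).symm
        _ < i₁ := e.lt_iff_lt.mpr this
      have hBD : ∀ k, s k ∈ D i₁ := fun k =>
        Or.inr (Set.mem_iUnion.mpr ⟨⟨ι k, hlt k⟩, hι k⟩)
      -- the witness
      let t : K → C := fun k => f {s k, x}
      have hex : ∃ a : X, a ∉ Set.range s ∧ ∀ k, f {s k, a} = t k :=
        ⟨x, hrange ▸ hxB, fun k => rfl⟩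
      obtain ⟨hw1, hw2⟩ := hw s t hex
      refine ⟨w s t, ?_, hrange ▸ hw1, ?_⟩
      · have : w s t ∈ F i₁ := by
          rw [hF i₁]
          exact Or.inr ⟨(s, t), hBD, rfl⟩
        exact Set.mem_iUnion.mpr ⟨i₁, this⟩
      · intro b hb
        rw [← hrange] at hb
        obtain ⟨k, rfl⟩ := hb
        exact (hw2 k).trans rfl
  -- choose a point outside A
  have hAX : #A < #X := lt_of_le_of_lt hAcard (Order.succ_le_iff.mp hX)
  have hxs : ∃ xs : X, xs ∉ A := by
    by_contra h
    push_neg at h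
    have : A = Set.univ := Set.eq_univ_iff_forall.mpr h
    rw [this, Cardinal.mk_univ] at hAX
    exact lt_irrefl _ hAX
  obtain ⟨xs, hxsA⟩ := hxs
  have hA : ∀ B : Set X, B ⊆ A → #B ≤ κ →
      ∃ y, y ∈ A ∧ y ∉ B ∧ ∀ b ∈ B, f {b, y} = f {b, xs} :=
    fun B hBA hBκ => hclo B hBA hBκ xs (fun h => hxsA (hBA h))
  -- build the κ⁺-sequence inside A realizing the type of xs
  have hsubA : ∀ (i : I) (v : Set.Iio i → A), Set.range (fun p => (v p : X)) ⊆ A := by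
    rintro i v _ ⟨p, rfl⟩; exact (v p).2
  have hcardB : ∀ (i : I) (v : Set.Iio i → X), #(Set.range v) ≤ κ :=
    fun i v => le_trans Cardinal.mk_range_le (hIio i)
  let body : ∀ i : I, (Set.Iio i → A) → A := fun i v =>
    ⟨(hA _ (hsubA i v) (hcardB i _)).choose, (hA _ (hsubA i v) (hcardB i _)).choose_spec.1⟩
  let a : I → A := wf.fix (fun i rec => body i (fun p => rec p.1 p.2))
  have haeq : ∀ i, a i = body i (fun p => a p.1) := fun i => wf.fix_eq _ i
  have haspec : ∀ i : I, (a i : X) ∉ Set.range (fun p : Set.Iio i => (a p.1 : X)) ∧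
      ∀ b ∈ Set.range (fun p : Set.Iio i => (a p.1 : X)), f {b, (a i : X)} = f {b, xs} := by
    intro i
    have h := (hA _ (hsubA i (fun p : Set.Iio i => a p.1)) (hcardB i _)).choose_spec
    rw [haeq i]
    exact ⟨h.2.1, h.2.2⟩
  have hord : ∀ j i : I, j < i → (a j : X) ≠ (a i : X) ∧
      f {(a j : X), (a i : X)} = f {(a j : X), xs} := by
    intro j i hji
    have hmem : (a j : X) ∈ Set.range (fun p : Set.Iio i => (a p.1 : X)) :=
      ⟨⟨j, hji⟩, rfl⟩
    exact ⟨fun h => (haspec i).1 (h ▸ hmem), (haspec i).2 _ hmem⟩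
  have hainj : Function.Injective (fun i => (a i : X)) := by
    intro i j h
    by_contra hne
    rcases lt_or_gt_of_ne hne with hlt | hlt
    · exact (hord i j hlt).1 h
    · exact (hord j i hlt).1 h.symm
  -- pigeonhole
  let c : I → C := fun i => f {(a i : X), xs}
  have hIinf : ℵ₀ ≤ #I := by rw [hIcard]; exact hκ.trans (Order.le_succ κ)
  have hCcof : #C < (#I).ord.cof := by
    rw [hIcard, (Cardinal.isRegular_succ hκ).cof_eq]
    exact hC.trans_lt (Order.lt_succ κ)
  obtain ⟨c₀, hc₀⟩ := Cardinal.infinite_pigeonhole c hIinf hCcof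
  -- the homogeneous set
  refine ⟨(fun i => (a i : X)) '' (c ⁻¹' {c₀}), ?_, ?_⟩
  · rw [Cardinal.mk_image_eq_of_injOn _ _ (hainj.injOn), hc₀, hIcard]
  · have key : ∀ i j : I, i ∈ c ⁻¹' {c₀} → j ∈ c ⁻¹' {c₀} → i ≠ j →
        f {(a i : X), (a j : X)} = c₀ := by
      intro i j hi hj hij
      rcases lt_or_gt_of_ne hij with hlt | hlt
      · rw [(hord i j hlt).2]
        exact hi
      · rw [Finset.pair_comm, (hord j i hlt).2]
        exact hj
    rintro x ⟨i, hi, rfl⟩ y ⟨j, hj, rfl⟩ hxy x' ⟨i', hi', rfl⟩ y' ⟨j', hj', rfl⟩ hxy'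
    have hij : i ≠ j := fun h => hxy (by rw [h])
    have hij' : i' ≠ j' := fun h => hxy' (by rw [h])
    rw [key i j hi hj hij, key i' j' hi' hj' hij']
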